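/- arXiv:1610.03298 — 2 statements merged into one kernel-verified Lean document; each statement's English description precedes it below -/
import Mathlib

section
/- Let G be a graph, X ⊆ V(G) such that Torso_G(X) has treewidth at most k and every connected component of G − X has at most q vertices. Then the treewidth of G is at most q + k. -/
open SimpleGraph

/-- The torso of `X` in `G`: graph on `X` with an edge between `x₁, x₂ ∈ X` whenever
`x₁x₂ ∈ E(G)` or both have a neighbor in the same connected component of `G − X`. -/
def torso {V : Type} (G : SimpleGraph V) (X : Set V) : SimpleGraph X where
  Adj a b := a ≠ b ∧ (G.Adj a b ∨ ∃ u v : (Xᶜ : Set V),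
    G.Adj (a : V) (u : V) ∧ G.Adj (b : V) (v : V) ∧ (G.induce (Xᶜ : Set V)).Reachable u v)
  symm := ⟨by
    rintro a b ⟨hne, h | ⟨u, v, h1, h2, h3⟩⟩
    · exact ⟨hne.symm, Or.inl h.symm⟩
    · exact ⟨hne.symm, Or.inr ⟨v, u, h2, h1, h3.symm⟩⟩⟩
  loopless := ⟨fun a h => h.1 rfl⟩

/-- `(T, B)` is a tree decomposition of `G`. -/
def IsTreeDecomp {V t : Type} (G : SimpleGraph V) (T : SimpleGraph t) (B : t → Set V) : Prop :=
  T.IsTree ∧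
  (∀ v : V, ∃ i, v ∈ B i) ∧
  (∀ ⦃u v : V⦄, G.Adj u v → ∃ i, u ∈ B i ∧ v ∈ B i) ∧
  (∀ v : V, (T.induce {i | v ∈ B i}).Connected)

/-- `G` has treewidth at most `k`. -/
def HasTreewidthLE {V : Type} (G : SimpleGraph V) (k : ℕ) : Prop :=
  ∃ (t : Type) (T : SimpleGraph t) (B : t → Set V),
    IsTreeDecomp G T B ∧ ∀ i, (B i).Finite ∧ (B i).ncard ≤ k + 1


namespace TWAux

variable {t : Type} {T : SimpleGraph t}

lemma takeUntil_start [DecidableEq t] {a c : t} (q : T.Walk a c) (h : a ∈ q.support) :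
    q.takeUntil a h = Walk.nil := by
  cases q with
  | nil => rfl
  | cons h p => simp [Walk.takeUntil]

lemma takeUntil_cons [DecidableEq t] {a v c u : t} (h : T.Adj a v) (p : T.Walk v c)
    (hm : u ∈ p.support) (hne : a ≠ u) :
    (Walk.cons h p).takeUntil u (by simp [hm]) = Walk.cons h (p.takeUntil u hm) := by
  simp [Walk.takeUntil, hne]

lemma exists_first [DecidableEq t] {P : t → Prop} [DecidablePred P] :
    ∀ {a c : t} (q : T.Walk a c), P c → ∃ (m : t) (hm : m ∈ q.support), P m ∧
      ∀ x ∈ (q.takeUntil m hm).support, P x → x = m := by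
  intro a c q
  induction q with
  | nil =>
    intro hc
    refine ⟨_, by simp, hc, fun x hx _ => ?_⟩
    have := Walk.support_takeUntil_subset _ _ hx
    simpa using this
  | @cons a v c h p ih =>
    intro hc
    by_cases ha : P a
    · refine ⟨a, by simp, ha, ?_⟩
      intro x hx _
      change x ∈ ((Walk.cons h p).takeUntil a (Walk.start_mem_support _)).support at hx
      rw [takeUntil_start] at hx
      simpa using hx
    · obtain ⟨m, hm, hPm, hmin⟩ := ih hc
      have hne : a ≠ m := fun e => ha (e ▸ hPm)
      refine ⟨m, by simp [hm], hPm, ?_⟩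
      intro x hx hPx
      rw [takeUntil_cons h p hm hne] at hx
      rcases (by simpa using hx : x = a ∨ x ∈ (p.takeUntil m hm).support) with rfl | hx'
      · exact absurd hPx ha
      · exact hmin x hx' hPx

end TWAux

namespace TWAux

variable {t : Type} {T : SimpleGraph t}

lemma path_support_subset (hT : T.IsTree) {A : Set t} (hA : (T.induce A).Connected)
    {a b : t} (ha : a ∈ A) (hb : b ∈ A) {p : T.Walk a b} (hp : p.IsPath) :
    ∀ x ∈ p.support, x ∈ A := by
  classical
  rw [connected_induce_iff] at hA
  obtain ⟨w, hw⟩ := (Subgraph.connected_iff_forall_exists_walk_subgraph _).1 hA |>.2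
    (by simpa using ha) (by simpa using hb)
  have hws : ∀ x ∈ w.support, x ∈ A := by
    intro x hx
    have : x ∈ w.toSubgraph.verts := by rw [Walk.mem_verts_toSubgraph]; exact hx
    simpa using hw.1 this
  have := (hT.existsUnique_path a b).unique hp w.bypass_isPath
  rw [this]
  intro x hx
  exact hws x (Walk.support_bypass_subset _ hx)

lemma reachable_induce_of_walk {A : Set t} {a b : t} (ha : a ∈ A) (hb : b ∈ A)
    (w : T.Walk a b) (hw : ∀ x ∈ w.support, x ∈ A) :
    (T.induce A).Reachable ⟨a, ha⟩ ⟨b, hb⟩ := by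
  have hc := w.connected_induce_support
  have hr := hc ⟨a, w.start_mem_support⟩ ⟨b, w.end_mem_support⟩
  exact hr.map (induceHomOfLE T (fun x hx => hw x hx)).toHom

lemma inter_connected (hT : T.IsTree) {A B : Set t}
    (hA : (T.induce A).Connected) (hB : (T.induce B).Connected)
    (hne : (A ∩ B).Nonempty) : (T.induce (A ∩ B)).Connected := by
  rw [connected_iff_exists_forall_reachable]
  obtain ⟨a, ha⟩ := hne
  refine ⟨⟨a, ha⟩, ?_⟩
  rintro ⟨b, hb⟩
  obtain ⟨p, hp, -⟩ := hT.existsUnique_path a b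
  have h1 := path_support_subset hT hA ha.1 hb.1 hp
  have h2 := path_support_subset hT hB ha.2 hb.2 hp
  exact (reachable_induce_of_walk ha hb p
    (fun x hx => Set.mem_inter (h1 x hx) (h2 x hx)))

end TWAux

namespace TWAux

variable {t : Type} {T : SimpleGraph t}

lemma median (hT : T.IsTree) {a b c : t} {p : T.Walk a b} {q : T.Walk a c} {r : T.Walk b c}
    (hp : p.IsPath) (hq : q.IsPath) (hr : r.IsPath) :
    ∃ m, m ∈ p.support ∧ m ∈ q.support ∧ m ∈ r.support := by
  classical
  obtain ⟨m, hm, hmr, hmin⟩ := exists_first (P := fun x => x ∈ r.support) q r.end_mem_support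
  refine ⟨m, ?_, hm, hmr⟩
  set q1 := q.takeUntil m hm with hq1
  set r1 := r.takeUntil m hmr with hr1
  have hq1p : q1.IsPath := hq.takeUntil hm
  have hr1p : r1.IsPath := hr.takeUntil hmr
  have hw : (q1.append r1.reverse).IsPath := by
    rw [Walk.isPath_def, Walk.support_append]
    refine List.Nodup.append hq1p.support_nodup ?_ ?_
    · exact (hr1p.reverse.support_nodup).tail
    · -- disjoint
      intro x hx1 hx2
      have hxr : x ∈ r.support := by
        have : x ∈ r1.reverse.support := List.mem_of_mem_tail hx2
        rw [Walk.support_reverse] at this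
        exact Walk.support_takeUntil_subset _ hmr (List.mem_reverse.1 this)
      have hxm : x = m := hmin x hx1 hxr
      rw [hxm] at hx2
      -- m is the head of r1.reverse.support, and support is nodup, so not in tail
      have hhead : r1.reverse.support = m :: r1.reverse.support.tail :=
        Walk.support_eq_cons _
      have hnd := hr1p.reverse.support_nodup
      rw [hhead] at hnd
      exact (List.nodup_cons.1 hnd).1 hx2
  have := (hT.existsUnique_path a b).unique hp hw
  rw [this, Walk.mem_support_append_iff]
  exact Or.inl (Walk.end_mem_support q1)

end TWAux

namespace TWAux

variable {t : Type} {T : SimpleGraph t}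

lemma helly3 (hT : T.IsTree) {A B C : Set t}
    (hA : (T.induce A).Connected) (hB : (T.induce B).Connected) (hC : (T.induce C).Connected)
    (hAB : (A ∩ B).Nonempty) (hAC : (A ∩ C).Nonempty) (hBC : (B ∩ C).Nonempty) :
    (A ∩ B ∩ C).Nonempty := by
  obtain ⟨a, haA, haB⟩ := hAB
  obtain ⟨b, hbA, hbC⟩ := hAC
  obtain ⟨c, hcB, hcC⟩ := hBC
  obtain ⟨p, hp, -⟩ := hT.existsUnique_path a b
  obtain ⟨q, hq, -⟩ := hT.existsUnique_path a c
  obtain ⟨r, hr, -⟩ := hT.existsUnique_path b c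
  obtain ⟨m, hmp, hmq, hmr⟩ := median hT hp hq hr
  exact ⟨m, ⟨path_support_subset hT hA haA hbA hp m hmp,
    path_support_subset hT hB haB hcB hq m hmq⟩,
    path_support_subset hT hC hbC hcC hr m hmr⟩

lemma helly {ι : Type} (hT : T.IsTree) (S : Finset ι) (A : ι → Set t)
    (hconn : ∀ i ∈ S, (T.induce (A i)).Connected)
    (hpair : ∀ i ∈ S, ∀ j ∈ S, (A i ∩ A j).Nonempty) :
    ∃ m, ∀ i ∈ S, m ∈ A i := by
  classical
  induction S using Finset.induction generalizing A with
  | empty =>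
    have : Nonempty t := hT.isConnected.nonempty
    exact ⟨Classical.arbitrary t, by simp⟩
  | @insert i S hi ih =>
    rcases S.eq_empty_or_nonempty with rfl | ⟨j₀, hj₀⟩
    · obtain ⟨m, hm, -⟩ := hpair i (by simp) i (by simp)
      exact ⟨m, by simpa using hm⟩
    · obtain ⟨m, hm⟩ := ih (fun j => A j ∩ A i)
        (fun j hj => inter_connected hT (hconn j (by simp [hj]))
          (hconn i (by simp)) (hpair j (by simp [hj]) i (by simp)))
        (fun j hj l hl => by
          obtain ⟨m, hm⟩ := helly3 hT (hconn j (by simp [hj])) (hconn l (by simp [hl]))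
            (hconn i (by simp)) (hpair j (by simp [hj]) l (by simp [hl]))
            (hpair j (by simp [hj]) i (by simp)) (hpair l (by simp [hl]) i (by simp))
          exact ⟨m, Set.mem_inter (Set.mem_inter hm.1.1 hm.2) (Set.mem_inter hm.1.2 hm.2)⟩)
      refine ⟨m, ?_⟩
      intro j hj
      rcases Finset.mem_insert.1 hj with rfl | hj'
      · exact (hm j₀ hj₀).2
      · exact (hm j hj').1

end TWAux

namespace TWAux

variable {t : Type} {T : SimpleGraph t}

lemma clique_in_bag {α : Type} {H : SimpleGraph α} {B : t → Set α}
    (hTd : IsTreeDecomp H T B) (S : Finset α)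
    (hS : ∀ x ∈ S, ∀ y ∈ S, x ≠ y → H.Adj x y) :
    ∃ i, ∀ x ∈ S, x ∈ B i := by
  obtain ⟨hTree, hcov, hedge, hconn⟩ := hTd
  apply helly hTree S (fun x => {i | x ∈ B i}) (fun x _ => hconn x)
  intro x hx y hy
  by_cases hxy : x = y
  · subst hxy
    obtain ⟨i, hi⟩ := hcov x
    exact ⟨i, hi, hi⟩
  · obtain ⟨i, hi1, hi2⟩ := hedge (hS x hx y hy hxy)
    exact ⟨i, hi1, hi2⟩

lemma not_mem_cycle_of_unique_nbr {x n : t} (hx : ∀ y, T.Adj x y → y = n)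
    {v : t} {p : T.Walk v v} (hp : p.IsCycle) : x ∉ p.support := by
  classical
  intro hmem
  obtain ⟨c, hrot⟩ : ∃ c : T.Walk x x, c.IsCycle := ⟨p.rotate x hmem, hp.rotate hmem⟩
  cases c with
  | nil => exact Walk.IsCycle.not_of_nil hrot
  | cons hadj q =>
    rename_i w
    have hw := hx _ hadj
    cases hqr : q.reverse with
    | nil => exact hadj.ne rfl
    | cons hadj' q' =>
      rename_i z
      have hz : z = n := hx _ hadj'
      have hmemedge : s(x, w) ∈ q.edges := by
        have h1 : s(x, z) ∈ q.reverse.edges := by rw [hqr]; simp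
        rw [Walk.edges_reverse, List.mem_reverse, hz, ← hw] at h1
        exact h1
      have hnd := hrot.isTrail.edges_nodup
      simp only [Walk.edges_cons, List.nodup_cons] at hnd
      exact hnd.1 hmemedge

end TWAux

namespace TWAux

variable {t ι : Type} {T : SimpleGraph t}

/-- Attach a pendant leaf for each element of `ι` at the node `f c`. -/
def attachLeaves (T : SimpleGraph t) (f : ι → t) : SimpleGraph (t ⊕ ι) where
  Adj x y := match x, y with
    | .inl i, .inl j => T.Adj i j
    | .inl i, .inr c => i = f c
    | .inr c, .inl i => i = f c
    | .inr _, .inr _ => False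
  symm := ⟨by rintro (i | c) (j | d) h <;> simp_all <;> exact h.symm⟩
  loopless := ⟨by rintro (i | c) h <;> simp_all <;> exact h.ne rfl⟩

lemma attachLeaves_adj_inl {f : ι → t} {i j : t} :
    (attachLeaves T f).Adj (.inl i) (.inl j) ↔ T.Adj i j := Iff.rfl

lemma attachLeaves_adj_inr {f : ι → t} {c : ι} {y : t ⊕ ι} :
    (attachLeaves T f).Adj (.inr c) y → y = .inl (f c) := by
  cases y with
  | inl i => intro h; exact congrArg Sum.inl h
  | inr d => intro h; exact absurd h (by simp [attachLeaves])

/-- `Sum.inl` as a graph homomorphism `T →g attachLeaves T f`. -/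
def homInl (f : ι → t) : T →g attachLeaves T f := ⟨Sum.inl, fun h => h⟩

lemma lift_walk {f : ι → t} :
    ∀ {u v : t ⊕ ι} (p : (attachLeaves T f).Walk u v),
      (∀ x ∈ p.support, x.isLeft) → ∀ {i j : t} (hu : u = .inl i) (hv : v = .inl j),
      ∃ q : T.Walk i j, p.copy hu hv = q.map (homInl f) := by
  intro u v p
  induction p with
  | nil =>
    intro _ i j hu hv
    subst hu
    obtain rfl : i = j := Sum.inl_injective hv
    exact ⟨Walk.nil, rfl⟩
  | @cons u w v hadj p' ih =>
    intro h i j hu hv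
    subst hu
    obtain ⟨i₂, rfl⟩ : ∃ i₂, w = Sum.inl i₂ := by
      have := h w (by simp)
      rwa [Sum.isLeft_iff] at this
    have hadjT : T.Adj i i₂ := hadj
    obtain ⟨q', hq'⟩ := ih (fun x hx => h x (by simp [hx])) rfl hv
    refine ⟨Walk.cons hadjT q', ?_⟩
    rw [Walk.map_cons, Walk.copy_cons]
    exact congrArg (Walk.cons _) hq' 

lemma attachLeaves_isTree (hT : T.IsTree) (f : ι → t) : (attachLeaves T f).IsTree := by
  constructor
  · -- connected
    rw [connected_iff]
    constructor
    · intro x y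
      have key : ∀ z : t ⊕ ι, ∃ i : t, (attachLeaves T f).Reachable z (.inl i) := by
        rintro (i | c)
        · exact ⟨i, Reachable.refl _⟩
        · exact ⟨f c, Adj.reachable (by show (f c : t) = f c; rfl)⟩
      obtain ⟨i, hi⟩ := key x
      obtain ⟨j, hj⟩ := key y
      have : (attachLeaves T f).Reachable (.inl i) (.inl j) :=
        (hT.isConnected.preconnected i j).map (homInl f)
      exact (hi.trans this).trans hj.symm
    · exact ⟨Sum.inl (Classical.choice hT.isConnected.nonempty)⟩
  · -- acyclic
    intro v p hp
    have hleft : ∀ x ∈ p.support, x.isLeft := by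
      intro x hx
      cases x with
      | inl i => rfl
      | inr c =>
        exact absurd hx (not_mem_cycle_of_unique_nbr (fun y hy => attachLeaves_adj_inr hy) hp)
    obtain ⟨i, rfl⟩ : ∃ i, v = Sum.inl i := by
      have := hleft v p.start_mem_support
      rwa [Sum.isLeft_iff] at this
    obtain ⟨q, hq⟩ := lift_walk p hleft rfl rfl
    rw [Walk.copy_rfl_rfl] at hq
    subst hq
    exact hT.IsAcyclic q ((Walk.map_isCycle_iff_of_injective (fun a b => by
      exact fun h => Sum.inl_injective h)).1 hp)

end TWAux

namespace TWAux

lemma induce_singleton_connected {W : Type} (H : SimpleGraph W) (x : W) :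
    (H.induce {x}).Connected := by
  rw [connected_iff]
  refine ⟨fun a b => ?_, ⟨⟨x, rfl⟩⟩⟩
  have hab : a = b := Subtype.ext ((a.2 : a.1 = x).trans (b.2 : b.1 = x).symm)
  rw [hab]

end TWAux

theorem treewidth_of_small_components {V : Type} [Fintype V] (G : SimpleGraph V) (X : Set V)
    (k q : ℕ) (htw : HasTreewidthLE (torso G X) k)
    (hcomp : ∀ C : (G.induce (Xᶜ : Set V)).ConnectedComponent, C.supp.ncard ≤ q) :
    HasTreewidthLE G (q + k) := by
  classical
  obtain ⟨t, T, B, hTd, hbags⟩ := htw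
  have hTree := hTd.1
  have hcov := hTd.2.1
  have hedge := hTd.2.2.1
  have hconn := hTd.2.2.2
  let N : (G.induce (Xᶜ : Set V)).ConnectedComponent → Set X := fun C =>
    {x | ∃ u : (Xᶜ : Set V), G.Adj x.val u.val ∧
      (G.induce (Xᶜ : Set V)).connectedComponentMk u = C}
  have hclique : ∀ C, ∃ i, ∀ x ∈ N C, x ∈ B i := by
    intro C
    have hadjS : ∀ x ∈ (Set.toFinite (N C)).toFinset, ∀ y ∈ (Set.toFinite (N C)).toFinset,
        x ≠ y → (torso G X).Adj x y := by
      rintro x hx y hy hxy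
      rw [Set.Finite.mem_toFinset] at hx hy
      obtain ⟨ux, hux, hcx⟩ := hx
      obtain ⟨uy, huy, hcy⟩ := hy
      exact ⟨hxy, Or.inr ⟨ux, uy, hux, huy,
        ConnectedComponent.exact (hcx.trans hcy.symm)⟩⟩
    obtain ⟨i, hi⟩ := TWAux.clique_in_bag hTd (Set.toFinite (N C)).toFinset hadjS
    exact ⟨i, fun x hx => hi x ((Set.Finite.mem_toFinset _).2 hx)⟩
  choose f hf using hclique
  let B' : t ⊕ (G.induce (Xᶜ : Set V)).ConnectedComponent → Set V := fun n =>
    match n with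
    | .inl i => Subtype.val '' B i
    | .inr C => (Subtype.val '' C.supp) ∪ (Subtype.val '' N C)
  refine ⟨t ⊕ (G.induce (Xᶜ : Set V)).ConnectedComponent, TWAux.attachLeaves T f, B',
    ⟨TWAux.attachLeaves_isTree hTree f, ?_, ?_, ?_⟩, ?_⟩
  · -- cover
    intro v
    by_cases hv : v ∈ X
    · obtain ⟨i, hi⟩ := hcov ⟨v, hv⟩
      exact ⟨.inl i, ⟨⟨v, hv⟩, hi, rfl⟩⟩
    · exact ⟨.inr ((G.induce (Xᶜ : Set V)).connectedComponentMk ⟨v, hv⟩),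
        Or.inl ⟨⟨v, hv⟩, (ConnectedComponent.mem_supp_iff _ _).2 rfl, rfl⟩⟩
  · -- edges
    intro u v huv
    by_cases hu : u ∈ X <;> by_cases hv : v ∈ X
    · have hne : (⟨u, hu⟩ : X) ≠ ⟨v, hv⟩ := fun h => huv.ne (congrArg Subtype.val h)
      obtain ⟨i, h1, h2⟩ := hedge ⟨hne, Or.inl huv⟩
      exact ⟨.inl i, ⟨⟨u, hu⟩, h1, rfl⟩, ⟨⟨v, hv⟩, h2, rfl⟩⟩
    · refine ⟨.inr ((G.induce (Xᶜ : Set V)).connectedComponentMk ⟨v, hv⟩),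
        Or.inr ⟨⟨u, hu⟩, ⟨⟨v, hv⟩, huv, rfl⟩, rfl⟩,
        Or.inl ⟨⟨v, hv⟩, (ConnectedComponent.mem_supp_iff _ _).2 rfl, rfl⟩⟩
    · refine ⟨.inr ((G.induce (Xᶜ : Set V)).connectedComponentMk ⟨u, hu⟩),
        Or.inl ⟨⟨u, hu⟩, (ConnectedComponent.mem_supp_iff _ _).2 rfl, rfl⟩,
        Or.inr ⟨⟨v, hv⟩, ⟨⟨u, hu⟩, huv.symm, rfl⟩, rfl⟩⟩
    · have hadj : (G.induce (Xᶜ : Set V)).Adj ⟨u, hu⟩ ⟨v, hv⟩ := huv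
      refine ⟨.inr ((G.induce (Xᶜ : Set V)).connectedComponentMk ⟨u, hu⟩),
        Or.inl ⟨⟨u, hu⟩, (ConnectedComponent.mem_supp_iff _ _).2 rfl, rfl⟩,
        Or.inl ⟨⟨v, hv⟩, (ConnectedComponent.mem_supp_iff _ _).2 ?_, rfl⟩⟩
      exact (ConnectedComponent.connectedComponentMk_eq_of_adj hadj).symm
  · -- connectivity of bags containing v
    intro v
    by_cases hv : v ∈ X
    · have hmeml : ∀ i : t, (v ∈ B' (.inl i)) ↔ (⟨v, hv⟩ : X) ∈ B i := by
        intro i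
        constructor
        · rintro ⟨x, hx, hxval⟩
          obtain rfl : x = ⟨v, hv⟩ := Subtype.ext hxval
          exact hx
        · intro h; exact ⟨⟨v, hv⟩, h, rfl⟩
      have hmemr : ∀ C, (v ∈ B' (.inr C)) ↔ (⟨v, hv⟩ : X) ∈ N C := by
        intro C
        constructor
        · rintro (⟨y, hy, hval⟩ | ⟨x, hx, hxval⟩)
          · exact absurd (hval ▸ y.2) (by simpa using hv)
          · obtain rfl : x = ⟨v, hv⟩ := Subtype.ext hxval
            exact hx
        · intro h; exact Or.inr ⟨⟨v, hv⟩, h, rfl⟩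
      set S : Set (t ⊕ (G.induce (Xᶜ : Set V)).ConnectedComponent) := {m | v ∈ B' m} with hS
      have hSl : ∀ i : t, (Sum.inl i ∈ S) ↔ (⟨v, hv⟩ : X) ∈ B i := fun i => hmeml i
      have hSr : ∀ C, (Sum.inr C ∈ S) ↔ (⟨v, hv⟩ : X) ∈ N C := fun C => hmemr C
      rw [connected_iff]
      constructor
      · have key : ∀ n (hn : n ∈ S), ∃ i, ∃ hi : Sum.inl i ∈ S,
            ((⟨v, hv⟩ : X) ∈ B i) ∧
            ((TWAux.attachLeaves T f).induce S).Reachable ⟨n, hn⟩ (⟨.inl i, hi⟩ : S) := by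
          rintro (i | C) hn
          · exact ⟨i, hn, (hSl i).1 hn, Reachable.refl _⟩
          · have hC : (⟨v, hv⟩ : X) ∈ N C := (hSr C).1 hn
            refine ⟨f C, (hSl (f C)).2 (hf C _ hC), hf C _ hC, Adj.reachable ?_⟩
            show (TWAux.attachLeaves T f).Adj (.inr C) (.inl (f C))
            rfl
        rintro ⟨n, hn⟩ ⟨n', hn'⟩
        obtain ⟨i, hi, hBi, hr⟩ := key n hn
        obtain ⟨j, hj, hBj, hr'⟩ := key n' hn'
        refine hr.trans (Reachable.trans ?_ hr'.symm)
        have hreach := (hconn ⟨v, hv⟩) ⟨i, hBi⟩ ⟨j, hBj⟩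
        let φ : T.induce {i | (⟨v, hv⟩ : X) ∈ B i} →g (TWAux.attachLeaves T f).induce S :=
          ⟨fun a => ⟨Sum.inl a.1, (hSl a.1).2 a.2⟩, fun {a b} hab => hab⟩
        exact hreach.map φ
      · obtain ⟨i, hi⟩ := hcov ⟨v, hv⟩
        exact ⟨⟨.inl i, (hSl i).2 hi⟩⟩
    · have hset : {n | v ∈ B' n} =
          {Sum.inr ((G.induce (Xᶜ : Set V)).connectedComponentMk ⟨v, hv⟩)} := by
        ext n
        cases n with
        | inl i =>
          simp only [Set.mem_setOf_eq, Set.mem_singleton_iff]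
          constructor
          · rintro ⟨x, hx, hxval⟩
            exact absurd (hxval ▸ x.2) hv
          · rintro ⟨⟩
        | inr C =>
          simp only [Set.mem_setOf_eq, Set.mem_singleton_iff]
          constructor
          · rintro (⟨y, hy, hval⟩ | ⟨x, hx, hxval⟩)
            · have h1 : (G.induce (Xᶜ : Set V)).connectedComponentMk y = C :=
                (ConnectedComponent.mem_supp_iff _ _).1 hy
              have h2 : y = ⟨v, hv⟩ := Subtype.ext hval
              rw [← h1, h2]
            · exact absurd (hxval ▸ x.2) hv
          · rintro h
            obtain rfl : C = (G.induce (Xᶜ : Set V)).connectedComponentMk ⟨v, hv⟩ :=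
              Sum.inr_injective h
            exact Or.inl ⟨⟨v, hv⟩, (ConnectedComponent.mem_supp_iff _ _).2 rfl, rfl⟩
      rw [hset]
      exact TWAux.induce_singleton_connected _ _
  · -- bag sizes
    rintro (i | C)
    · constructor
      · exact (hbags i).1.image _
      · rw [Set.ncard_image_of_injective _ Subtype.val_injective]
        exact le_trans (hbags i).2 (by omega)
    · constructor
      · exact Set.toFinite _
      · calc ((Subtype.val '' C.supp) ∪ (Subtype.val '' N C)).ncard
            ≤ (Subtype.val '' C.supp).ncard + (Subtype.val '' N C).ncard :=
              Set.ncard_union_le _ _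
          _ ≤ q + (k + 1) := by
              gcongr
              · rw [Set.ncard_image_of_injective _ Subtype.val_injective]
                exact hcomp C
              · rw [Set.ncard_image_of_injective _ Subtype.val_injective]
                exact le_trans (Set.ncard_le_ncard (hf C)) (hbags (f C)).2
          _ = q + k + 1 := by omega
end

section
/- Call (A, S, B) a (q,k)-separation of a graph G if (A, S, B) partitions V(G), there are no edges between A and B, |S| ≤ k, and |A|, |B| ≥ q. If G has no (q, k+1)-separation, then for every X ⊆ V(G) with tw(Torso_G(X)) ≤ k, either tw(G) ≤ q + k, or G − X has exactly one connected component C of size at least q + 1 and |V(G) \ (C ∪ N(C))| ≤ q. -/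
open SimpleGraph

/-- `G` has a `(q,k)`-separation: a partition `(A,S,B)` of the vertex set with no edges
between `A` and `B`, `|S| ≤ k`, and `|A|, |B| ≥ q`. -/
def HasSeparation {V : Type} (G : SimpleGraph V) (q k : ℕ) : Prop :=
  ∃ A S B : Set V, A ∪ S ∪ B = Set.univ ∧
    Disjoint A S ∧ Disjoint A B ∧ Disjoint S B ∧
    (∀ a ∈ A, ∀ b ∈ B, ¬ G.Adj a b) ∧
    S.ncard ≤ k ∧ q ≤ A.ncard ∧ q ≤ B.ncard

section TreeLemmas
variable {t : Type} {T : SimpleGraph t}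

lemma path_append {u v w : t} {p : T.Walk u v} {q : T.Walk v w}
    (hp : p.IsPath) (hq : q.IsPath)
    (h : ∀ x, x ∈ p.support → x ∈ q.support → x = v) : (p.append q).IsPath := by
  rw [Walk.isPath_def, Walk.support_append]
  refine List.Nodup.append ((Walk.isPath_def p).mp hp) ?_ ?_
  · have := (Walk.isPath_def q).mp hq
    rw [Walk.support_eq_cons q] at this
    exact (List.nodup_cons.mp this).2
  · intro x hxp hxq
    have hxv : x = v := h x hxp (List.mem_of_mem_tail hxq)
    subst hxv
    have := (Walk.isPath_def q).mp hq
    rw [Walk.support_eq_cons q] at this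
    exact (List.nodup_cons.mp this).1 hxq

lemma exists_first_hit {s : Set t} {u v : t} (w : T.Walk u v) (hv : v ∈ s) :
    ∃ (m : t) (w1 : T.Walk u m) (w2 : T.Walk m v),
      w = w1.append w2 ∧ m ∈ s ∧ ∀ x ∈ w1.support, x ∈ s → x = m := by
  induction w with
  | nil =>
    exact ⟨_, Walk.nil, Walk.nil, rfl, hv, by simp⟩
  | @cons a b c hadj w ih =>
    by_cases ha : a ∈ s
    · exact ⟨a, Walk.nil, Walk.cons hadj w, rfl, ha, by simp⟩
    · obtain ⟨m, w1, w2, hw, hm, hfirst⟩ := ih hv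
      refine ⟨m, Walk.cons hadj w1, w2, by rw [hw, Walk.cons_append], hm, ?_⟩
      intro x hx hxs
      simp only [Walk.support_cons, List.mem_cons] at hx
      rcases hx with rfl | hx
      · exact absurd hxs ha
      · exact hfirst x hx hxs

lemma exists_median (hT : T.IsTree) (a b c : t) :
    ∃ m, (∃ p : T.Walk a b, p.IsPath ∧ m ∈ p.support) ∧
      (∃ p : T.Walk a c, p.IsPath ∧ m ∈ p.support) ∧
      (∃ p : T.Walk b c, p.IsPath ∧ m ∈ p.support) := by
  classical
  obtain ⟨p, hp, -⟩ := hT.existsUnique_path a b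
  obtain ⟨q0, hq0, -⟩ := hT.existsUnique_path c a
  obtain ⟨m, w1, w2, hw, hm, hfirst⟩ :=
    exists_first_hit (s := {x | x ∈ p.support}) q0 (p.start_mem_support)
  have hw1 : w1.IsPath := by
    have := hq0; rw [hw] at this; exact this.of_append_left
  refine ⟨m, ⟨p, hp, hm⟩, ?_, ?_⟩
  · refine ⟨q0.reverse, hq0.reverse, ?_⟩
    rw [Walk.support_reverse, List.mem_reverse, hw]
    exact Walk.subset_support_append_left w1 w2 w1.end_mem_support
  · have hdp : (p.dropUntil m hm).IsPath := hp.dropUntil hm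
    have hpath : (w1.append (p.dropUntil m hm)).IsPath := by
      refine path_append hw1 hdp ?_
      intro x hx1 hx2
      exact hfirst x hx1 (Walk.support_dropUntil_subset p hm hx2)
    refine ⟨(w1.append (p.dropUntil m hm)).reverse, hpath.reverse, ?_⟩
    rw [Walk.support_reverse, List.mem_reverse]
    exact Walk.subset_support_append_left _ _ w1.end_mem_support

lemma subtree_path_closed (hT : T.IsTree) {s : Set t} (hs : (T.induce s).Connected)
    {u v : t} (hu : u ∈ s) (hv : v ∈ s) {p : T.Walk u v} (hp : p.IsPath) :
    ∀ x ∈ p.support, x ∈ s := by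
  classical
  obtain ⟨w0⟩ := hs ⟨u, hu⟩ ⟨v, hv⟩
  let emb : T.induce s →g T := (SimpleGraph.Embedding.induce s).toHom
  have hwsup : ∀ x ∈ (w0.map emb).support, x ∈ s := by
    intro x hx
    rw [Walk.support_map] at hx
    obtain ⟨y, _, rfl⟩ := List.mem_map.mp hx
    exact y.2
  obtain ⟨P, hP, hPu⟩ := hT.existsUnique_path u v
  let W : T.Walk u v := (w0.map emb).copy rfl rfl
  have hwsup' : ∀ x ∈ W.support, x ∈ s := by
    intro x hx; exact hwsup x hx
  have h1 : (W.toPath : T.Walk u v) = P := hPu _ (W.toPath.2)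
  have h2 := Walk.support_toPath_subset W
  have h3 : p = P := hPu p hp
  rw [h3, ← h1]
  intro x hx
  exact hwsup' x (h2 hx)

lemma helly_list (hT : T.IsTree) [Nonempty t] :
    ∀ (n : ℕ) (L : List (Set t)), L.length = n →
    (∀ s ∈ L, ∀ u ∈ s, ∀ v ∈ s, ∀ p : T.Walk u v, p.IsPath → ∀ x ∈ p.support, x ∈ s) →
    (∀ s ∈ L, ∀ s' ∈ L, (s ∩ s').Nonempty) →
    ∃ m, ∀ s ∈ L, m ∈ s := by
  intro n
  induction n with
  | zero =>
    intro L hL _ _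
    rw [List.length_eq_zero_iff] at hL; subst hL
    exact ⟨Classical.arbitrary t, by simp⟩
  | succ n ih =>
    intro L hL hclosed hpair
    obtain rfl | ⟨s, L', rfl⟩ : L = [] ∨ ∃ s L', L = s :: L' := by
      cases L with
      | nil => exact Or.inl rfl
      | cons a l => exact Or.inr ⟨a, l, rfl⟩
    · exact ⟨Classical.arbitrary t, by simp⟩
    obtain rfl | ⟨s', L'', rfl⟩ : L' = [] ∨ ∃ s' L'', L' = s' :: L'' := by
      cases L' with
      | nil => exact Or.inl rfl
      | cons a l => exact Or.inr ⟨a, l, rfl⟩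
    · obtain ⟨m, hm⟩ := hpair s (by simp) s (by simp)
      exact ⟨m, by intro r hr; simp at hr; subst hr; exact hm.1⟩
    · have hlen : (((s ∩ s') :: L'') : List (Set t)).length = n := by
        simpa using Nat.succ_injective hL
      have hcl : ∀ r ∈ (s ∩ s') :: L'', ∀ u ∈ r, ∀ v ∈ r, ∀ p : T.Walk u v, p.IsPath →
          ∀ x ∈ p.support, x ∈ r := by
        intro r hr
        rcases List.mem_cons.mp hr with rfl | hr
        · intro u hu v hv p hp x hx
          exact ⟨hclosed s (by simp) u hu.1 v hv.1 p hp x hx,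
            hclosed s' (by simp) u hu.2 v hv.2 p hp x hx⟩
        · exact hclosed r (by simp [hr])
      have hpr : ∀ r ∈ (s ∩ s') :: L'', ∀ r' ∈ (s ∩ s') :: L'', (r ∩ r').Nonempty := by
        have key : ∀ r ∈ L'', ((s ∩ s') ∩ r).Nonempty := by
          intro r hr
          obtain ⟨a, ha⟩ := hpair s (by simp) r (by simp [hr])
          obtain ⟨b, hb⟩ := hpair s' (by simp) r (by simp [hr])
          obtain ⟨c, hc⟩ := hpair s (by simp) s' (by simp)
          obtain ⟨m, ⟨p1, hp1, hm1⟩, ⟨p2, hp2, hm2⟩, ⟨p3, hp3, hm3⟩⟩ := exists_median hT a b c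
          refine ⟨m, ⟨?_, ?_⟩, ?_⟩
          · exact hclosed s (by simp) a ha.1 c hc.1 p2 hp2 m hm2
          · exact hclosed s' (by simp) b hb.1 c hc.2 p3 hp3 m hm3
          · exact hclosed r (by simp [hr]) a ha.2 b hb.2 p1 hp1 m hm1
        intro r hr r' hr'
        rcases List.mem_cons.mp hr with rfl | hr <;>
          rcases List.mem_cons.mp hr' with rfl | hr'
        · obtain ⟨c, hc⟩ := hpair s (by simp) s' (by simp)
          exact ⟨c, hc, hc⟩
        · obtain ⟨m, hm⟩ := key r' hr'
          exact ⟨m, hm.1, hm.2⟩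
        · obtain ⟨m, hm⟩ := key r hr
          exact ⟨m, hm.2, hm.1⟩
        · exact hpair r (by simp [hr]) r' (by simp [hr'])
      obtain ⟨m, hm⟩ := ih _ hlen hcl hpr
      refine ⟨m, ?_⟩
      intro r hr
      rcases List.mem_cons.mp hr with rfl | hr
      · exact (hm (r ∩ s') (by simp)).1
      rcases List.mem_cons.mp hr with rfl | hr
      · exact (hm (s ∩ r) (by simp)).2
      · exact hm r (by simp [hr])

end TreeLemmas

/-- `T` together with, for each `C : c`, a pendant vertex attached at `f C`. -/
def augTree {t c : Type} (T : SimpleGraph t) (f : c → t) : SimpleGraph (t ⊕ c) where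
  Adj x y := (∃ i j, T.Adj i j ∧ x = Sum.inl i ∧ y = Sum.inl j) ∨
    (∃ C, x = Sum.inl (f C) ∧ y = Sum.inr C) ∨
    (∃ C, x = Sum.inr C ∧ y = Sum.inl (f C))
  symm := ⟨by
    rintro x y (⟨i, j, h, rfl, rfl⟩ | ⟨C, rfl, rfl⟩ | ⟨C, rfl, rfl⟩)
    · exact Or.inl ⟨j, i, h.symm, rfl, rfl⟩
    · exact Or.inr (Or.inr ⟨C, rfl, rfl⟩)
    · exact Or.inr (Or.inl ⟨C, rfl, rfl⟩)⟩
  loopless := ⟨by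
    rintro x (⟨i, j, h, rfl, heq⟩ | ⟨C, rfl, heq⟩ | ⟨C, rfl, heq⟩)
    · rw [Sum.inl.injEq] at heq; exact h.ne heq
    · exact Sum.inl_ne_inr heq
    · exact Sum.inr_ne_inl heq⟩

variable {t c : Type} {T : SimpleGraph t} {f : c → t}

lemma augTree_adj_inl_inl {i j : t} : (augTree T f).Adj (Sum.inl i) (Sum.inl j) ↔ T.Adj i j := by
  constructor
  · rintro (⟨i', j', h, hi, hj⟩ | ⟨C, hi, hj⟩ | ⟨C, hi, hj⟩)
    · rw [Sum.inl.injEq] at hi hj; rwa [hi, hj]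
    · exact absurd hj (Sum.inl_ne_inr)
    · exact absurd hi (Sum.inl_ne_inr)
  · intro h; exact Or.inl ⟨i, j, h, rfl, rfl⟩

lemma augTree_adj_inr_left {C : c} {y : t ⊕ c} :
    (augTree T f).Adj (Sum.inr C) y ↔ y = Sum.inl (f C) := by
  constructor
  · rintro (⟨i', j', h, hi, hj⟩ | ⟨C', hi, hj⟩ | ⟨C', hi, hj⟩)
    · exact absurd hi Sum.inr_ne_inl
    · exact absurd hi Sum.inr_ne_inl
    · rw [Sum.inr.injEq] at hi; rw [hj, hi]
  · rintro rfl; exact Or.inr (Or.inr ⟨C, rfl, rfl⟩)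

lemma augTree_adj_inl_inr {i : t} {C : c} :
    (augTree T f).Adj (Sum.inl i) (Sum.inr C) ↔ i = f C := by
  rw [adj_comm, augTree_adj_inr_left, Sum.inl.injEq]

lemma no_cycle_at_inr (C : c) (d : (augTree T f).Walk (Sum.inr C) (Sum.inr C)) :
    ¬ d.IsCycle := by
  intro hd
  cases d with
  | nil => exact hd.ne_nil rfl
  | @cons _ w _ ha d₁ =>
    obtain rfl : w = Sum.inl (f C) := augTree_adj_inr_left.mp ha
    obtain ⟨z, hb, d₂, hrev⟩ := Walk.exists_eq_cons_of_ne (by simp) d₁.reverse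
    obtain rfl : z = Sum.inl (f C) := augTree_adj_inr_left.mp hb
    have hd₁ : d₁ = (Walk.cons hb d₂).reverse := by rw [← hrev, Walk.reverse_reverse]
    have hnd : d₁.support.Nodup := by
      have := hd.support_nodup
      simpa using this
    rw [hd₁] at hnd
    simp only [Walk.support_reverse, Walk.support_cons, List.nodup_reverse] at hnd
    have hnd₂ : d₂.support.Nodup := (List.nodup_cons.mp hnd).2
    cases d₂ with
    | cons hz d₃ =>
      rw [Walk.support_cons] at hnd₂
      exact (List.nodup_cons.mp hnd₂).1 d₃.end_mem_support
    | nil =>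
      have htr := hd.edges_nodup
      rw [hd₁] at htr
      simp [Sym2.eq_swap] at htr

lemma augTree_lift : ∀ {x y : t ⊕ c} (w : (augTree T f).Walk x y),
    (∀ z ∈ w.support, ∃ i, z = Sum.inl i) →
    ∃ (i j : t) (w' : T.Walk i j), x = Sum.inl i ∧ y = Sum.inl j ∧
      w.support = w'.support.map Sum.inl ∧
      w.edges = w'.edges.map (Sym2.map Sum.inl) := by
  intro x y w
  induction w with
  | nil =>
    intro h
    obtain ⟨i, rfl⟩ := h _ (Walk.start_mem_support _)
    exact ⟨i, i, Walk.nil, rfl, rfl, by simp, by simp⟩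
  | @cons a b d ha w ih =>
    intro h
    obtain ⟨i, j, w', rfl, rfl, hs, he⟩ := ih (fun z hz => h z (by simp [hz]))
    obtain ⟨i0, rfl⟩ := h _ (Walk.start_mem_support _)
    have hadj : T.Adj i0 i := augTree_adj_inl_inl.mp ha
    exact ⟨i0, j, Walk.cons hadj w', rfl, rfl, by simp [hs], by simp [he]⟩

lemma augTree_isTree (hT : T.IsTree) (f : c → t) : (augTree T f).IsTree := by
  have hne : Nonempty t := hT.isConnected.nonempty
  obtain ⟨x0⟩ := hne
  let ι : T →g augTree T f := ⟨Sum.inl, fun {a b} h => Or.inl ⟨a, b, h, rfl, rfl⟩⟩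
  have reach_inl : ∀ i j : t, (augTree T f).Reachable (Sum.inl i) (Sum.inl j) := by
    intro i j
    exact (hT.isConnected i j).map ι
  have reach_any : ∀ x : t ⊕ c, (augTree T f).Reachable x (Sum.inl x0) := by
    intro x
    cases x with
    | inl i => exact reach_inl i x0
    | inr C =>
      exact (Adj.reachable (augTree_adj_inr_left.mpr rfl)).trans (reach_inl (f C) x0)
  haveI : Nonempty (t ⊕ c) := ⟨Sum.inl x0⟩
  constructor
  · exact Connected.mk (fun x y => (reach_any x).trans (reach_any y).symm)
  · classical
    intro v w hw
    have hnoinr : ∀ C : c, Sum.inr C ∉ w.support := by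
      intro C hC
      exact no_cycle_at_inr C (w.rotate _ hC) (hw.rotate hC)
    have hall : ∀ z ∈ w.support, ∃ i, z = Sum.inl i := by
      intro z hz
      cases z with
      | inl i => exact ⟨i, rfl⟩
      | inr C => exact absurd hz (hnoinr C)
    obtain ⟨i, j, w', hvi, hvj, hs, he⟩ := augTree_lift w hall
    have hij : i = j := by rw [hvi] at hvj; exact (Sum.inl.injEq _ _).mp hvj
    subst hij
    refine hT.IsAcyclic w' ?_
    refine ⟨⟨⟨?_⟩, ?_⟩, ?_⟩
    · have := hw.edges_nodup
      rw [he] at this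
      exact this.of_map _
    · intro hnil
      subst hnil
      simp only [Walk.support_nil, List.map_cons, List.map_nil] at hs
      cases w with
      | nil => exact hw.ne_nil rfl
      | cons hadj p =>
        rw [Walk.support_cons] at hs
        have hlen : p.support.length + 1 = 1 := by simpa using congrArg List.length hs
        exact Walk.support_ne_nil p (List.length_eq_zero_iff.mp (by omega))
    · have := hw.support_nodup
      rw [hs] at this
      have h2 : w'.support.tail.map (Sum.inl : t → t ⊕ c) = (w'.support.map Sum.inl).tail := by
        cases w'.support with
        | nil => simp
        | cons a l => simp
      rw [← h2] at this
      exact this.of_map _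

lemma clique_in_bag {α t : Type} {H : SimpleGraph α} {T : SimpleGraph t} {B : t → Set α}
    (hdec : IsTreeDecomp H T B) (W : Set α) (hW : W.Finite)
    (hclq : ∀ a ∈ W, ∀ b ∈ W, a ≠ b → H.Adj a b) : ∃ i, W ⊆ B i := by
  obtain ⟨hT, hcov, hedge, hconn⟩ := hdec
  have : Nonempty t := hT.isConnected.nonempty
  classical
  let L : List (Set t) := hW.toFinset.toList.map (fun w => {i | w ∈ B i})
  have hmemL : ∀ s ∈ L, ∃ w ∈ W, s = {i | w ∈ B i} := by
    intro s hs
    obtain ⟨w, hw, rfl⟩ := List.mem_map.mp hs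
    exact ⟨w, by simpa using hw, rfl⟩
  have hclosed : ∀ s ∈ L, ∀ u ∈ s, ∀ v ∈ s, ∀ p : T.Walk u v, p.IsPath →
      ∀ x ∈ p.support, x ∈ s := by
    intro s hs u hu v hv p hp
    obtain ⟨w, -, rfl⟩ := hmemL s hs
    exact subtree_path_closed hT (hconn w) hu hv hp
  have hpair : ∀ s ∈ L, ∀ s' ∈ L, (s ∩ s').Nonempty := by
    intro s hs s' hs'
    obtain ⟨w, hwW, rfl⟩ := hmemL s hs
    obtain ⟨w', hw'W, rfl⟩ := hmemL s' hs'
    by_cases hww : w = w'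
    · subst hww
      obtain ⟨i, hi⟩ := hcov w
      exact ⟨i, hi, hi⟩
    · obtain ⟨i, hi1, hi2⟩ := hedge (hclq w hwW w' hw'W hww)
      exact ⟨i, hi1, hi2⟩
  obtain ⟨m, hm⟩ := helly_list hT L.length L rfl hclosed hpair
  refine ⟨m, ?_⟩
  intro w hw
  exact hm {i | w ∈ B i} (List.mem_map.mpr ⟨w, by simpa using hw, rfl⟩)


/-- The neighborhood (in `X`) of a component of `G - X` is a clique in the torso. -/
lemma nbr_clique {V : Type} (G : SimpleGraph V) (X : Set V)
    (C : (G.induce (Xᶜ : Set V)).ConnectedComponent) :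
    ∀ a ∈ {x : X | ∃ u ∈ C.supp, G.Adj (x : V) (u : V)},
    ∀ b ∈ {x : X | ∃ u ∈ C.supp, G.Adj (x : V) (u : V)},
      a ≠ b → (torso G X).Adj a b := by
  rintro a ⟨u, hu, hau⟩ b ⟨u', hu', hbu'⟩ hne
  show a ≠ b ∧ (G.Adj a b ∨ ∃ u v : (Xᶜ : Set V),
    G.Adj (a : V) (u : V) ∧ G.Adj (b : V) (v : V) ∧ (G.induce (Xᶜ : Set V)).Reachable u v)
  refine ⟨hne, Or.inr ⟨u, u', hau, hbu', ?_⟩⟩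
  have h1 : (G.induce (Xᶜ : Set V)).connectedComponentMk u = C := hu
  have h2 : (G.induce (Xᶜ : Set V)).connectedComponentMk u' = C := hu'
  exact ConnectedComponent.exact (h1.trans h2.symm)

lemma small_components_tw {V : Type} [Fintype V] (G : SimpleGraph V) (q k : ℕ) (X : Set V)
    (htw : HasTreewidthLE (torso G X) k)
    (hsmall : ∀ C : (G.induce (Xᶜ : Set V)).ConnectedComponent,
      (Subtype.val '' C.supp).ncard ≤ q) :
    HasTreewidthLE G (q + k) := by
  classical
  obtain ⟨t, T, B, hdec, hbags⟩ := htw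
  have hT := hdec.1
  have hcov := hdec.2.1
  have hedge := hdec.2.2.1
  have hconn := hdec.2.2.2
  set Comp := (G.induce (Xᶜ : Set V)).ConnectedComponent with hComp
  have hf : ∀ C : Comp, ∃ i, {x : X | ∃ u ∈ C.supp, G.Adj (x : V) (u : V)} ⊆ B i :=
    fun C => clique_in_bag hdec _ (Set.toFinite _) (nbr_clique G X C)
  choose f hf using hf
  set B' : t ⊕ Comp → Set V := fun x =>
    match x with
    | Sum.inl i => Subtype.val '' B i
    | Sum.inr C => Subtype.val '' B (f C) ∪ Subtype.val '' C.supp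
    with hB'
  refine ⟨t ⊕ Comp, augTree T f, B', ⟨augTree_isTree hT f, ?_, ?_, ?_⟩, ?_⟩
  · -- coverage
    intro v
    by_cases hv : v ∈ X
    · obtain ⟨i, hi⟩ := hcov ⟨v, hv⟩
      exact ⟨Sum.inl i, ⟨⟨v, hv⟩, hi, rfl⟩⟩
    · refine ⟨Sum.inr ((G.induce (Xᶜ : Set V)).connectedComponentMk ⟨v, hv⟩), ?_⟩
      exact Or.inr ⟨⟨v, hv⟩, rfl, rfl⟩
  · -- edges
    intro u v huv
    by_cases hu : u ∈ X <;> by_cases hv : v ∈ X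
    · have hne : (⟨u, hu⟩ : X) ≠ ⟨v, hv⟩ := fun h => huv.ne (congrArg Subtype.val h)
      obtain ⟨i, hi1, hi2⟩ := hedge ((⟨hne, Or.inl huv⟩ : _ ∧ _) : (torso G X).Adj ⟨u, hu⟩ ⟨v, hv⟩)
      exact ⟨Sum.inl i, ⟨⟨u, hu⟩, hi1, rfl⟩, ⟨⟨v, hv⟩, hi2, rfl⟩⟩
    · set C := (G.induce (Xᶜ : Set V)).connectedComponentMk ⟨v, hv⟩ with hC
      refine ⟨Sum.inr C, Or.inl ⟨⟨u, hu⟩, hf C ⟨⟨v, hv⟩, rfl, huv⟩, rfl⟩, Or.inr ⟨⟨v, hv⟩, rfl, rfl⟩⟩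
    · set C := (G.induce (Xᶜ : Set V)).connectedComponentMk ⟨u, hu⟩ with hC
      refine ⟨Sum.inr C, Or.inr ⟨⟨u, hu⟩, rfl, rfl⟩, Or.inl ⟨⟨v, hv⟩, hf C ⟨⟨u, hu⟩, rfl, huv.symm⟩, rfl⟩⟩
    · have hadj : (G.induce (Xᶜ : Set V)).Adj ⟨u, hu⟩ ⟨v, hv⟩ := huv
      set C := (G.induce (Xᶜ : Set V)).connectedComponentMk ⟨u, hu⟩ with hC
      have hvC : (G.induce (Xᶜ : Set V)).connectedComponentMk ⟨v, hv⟩ = C :=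
        ConnectedComponent.sound hadj.reachable.symm
      exact ⟨Sum.inr C, Or.inr ⟨⟨u, hu⟩, rfl, rfl⟩, Or.inr ⟨⟨v, hv⟩, hvC, rfl⟩⟩
  · -- bag connectivity
    intro v
    by_cases hv : v ∈ X
    · -- the inl-part is as in the torso decomposition; inr parts hang off it
      set xv : X := ⟨v, hv⟩ with hxv
      have hmem_inl : ∀ i : t, (Sum.inl i ∈ {x : t ⊕ Comp | v ∈ B' x}) ↔ xv ∈ B i := by
        intro i
        constructor
        · rintro ⟨x, hx, hxval⟩
          have : x = xv := Subtype.val_injective hxval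
          rwa [← this]
        · intro h; exact ⟨xv, h, rfl⟩
      have hmem_inr : ∀ C : Comp, (Sum.inr C ∈ {x : t ⊕ Comp | v ∈ B' x}) ↔ xv ∈ B (f C) := by
        intro C
        constructor
        · rintro (⟨x, hx, hxval⟩ | ⟨u, hu, huval⟩)
          · have : x = xv := Subtype.val_injective hxval
            rwa [← this]
          · exact absurd (huval ▸ u.2) (fun h => h hv)
        · intro h; exact Or.inl ⟨xv, h, rfl⟩
      obtain ⟨i0, hi0⟩ := hcov xv
      haveI : Nonempty ({x : t ⊕ Comp | v ∈ B' x}) := ⟨⟨Sum.inl i0, (hmem_inl i0).mpr hi0⟩⟩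
      refine Connected.mk ?_
      let g : T.induce {i | xv ∈ B i} →g (augTree T f).induce {x : t ⊕ Comp | v ∈ B' x} :=
        ⟨fun p => ⟨Sum.inl p.1, (hmem_inl p.1).mpr p.2⟩,
         fun {p q} h => augTree_adj_inl_inl.mpr h⟩
      have reach_inl : ∀ (i j : t) (hi : Sum.inl i ∈ {x : t ⊕ Comp | v ∈ B' x})
          (hj : Sum.inl j ∈ {x : t ⊕ Comp | v ∈ B' x}),
          ((augTree T f).induce {x : t ⊕ Comp | v ∈ B' x}).Reachable ⟨Sum.inl i, hi⟩ ⟨Sum.inl j, hj⟩ := by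
        intro i j hi hj
        have := (hconn xv ⟨i, (hmem_inl i).mp hi⟩ ⟨j, (hmem_inl j).mp hj⟩).map g
        exact this
      rintro ⟨a, ha⟩ ⟨b, hb⟩
      have key : ∀ (a : t ⊕ Comp) (ha : a ∈ {x : t ⊕ Comp | v ∈ B' x}),
          ∃ (i : t) (hi : Sum.inl i ∈ {x : t ⊕ Comp | v ∈ B' x}),
          ((augTree T f).induce {x : t ⊕ Comp | v ∈ B' x}).Reachable ⟨a, ha⟩ ⟨Sum.inl i, hi⟩ := by
        rintro (i | C) ha
        · exact ⟨i, ha, Reachable.refl _⟩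
        · have hfC : Sum.inl (f C) ∈ {x : t ⊕ Comp | v ∈ B' x} :=
            (hmem_inl (f C)).mpr ((hmem_inr C).mp ha)
          refine ⟨f C, hfC, Adj.reachable ?_⟩
          exact augTree_adj_inr_left.mpr rfl
      obtain ⟨i, hi, hra⟩ := key a ha
      obtain ⟨j, hj, hrb⟩ := key b hb
      exact (hra.trans (reach_inl i j hi hj)).trans hrb.symm
    · -- v ∉ X: the set of bags containing v is the singleton {inr C_v}
      set Cv := (G.induce (Xᶜ : Set V)).connectedComponentMk ⟨v, hv⟩ with hCv
      have honly : ∀ x ∈ {x : t ⊕ Comp | v ∈ B' x}, x = Sum.inr Cv := by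
        rintro (i | C) hx
        · obtain ⟨y, -, hyval⟩ := hx
          exact absurd (hyval ▸ y.2) hv
        · rcases hx with ⟨y, -, hyval⟩ | ⟨u, hu, huval⟩
          · exact absurd (hyval ▸ y.2) hv
          · have : u = ⟨v, hv⟩ := Subtype.val_injective huval
            rw [this] at hu
            rw [Sum.inr.injEq]
            exact hu.symm ▸ rfl
      have hmem : Sum.inr Cv ∈ {x : t ⊕ Comp | v ∈ B' x} := Or.inr ⟨⟨v, hv⟩, rfl, rfl⟩
      refine Connected.mk (nonempty := ⟨⟨_, hmem⟩⟩) ?_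
      rintro ⟨a, ha⟩ ⟨b, hb⟩
      have : a = b := (honly a ha).trans (honly b hb).symm
      subst this
      rfl
  · -- bag sizes
    rintro (i | C)
    · refine ⟨Set.toFinite _, ?_⟩
      rw [Set.ncard_image_of_injective _ Subtype.val_injective]
      have := (hbags i).2
      omega
    · refine ⟨Set.toFinite _, ?_⟩
      refine le_trans (Set.ncard_union_le _ _) ?_
      rw [Set.ncard_image_of_injective _ Subtype.val_injective]
      have h1 := (hbags (f C)).2
      have h2 := hsmall C
      omega

theorem unbreakable_implies_nice {V : Type} [Fintype V] (G : SimpleGraph V) (q k : ℕ)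
    (hsep : ¬ HasSeparation G q (k + 1)) (X : Set V)
    (htw : HasTreewidthLE (torso G X) k) :
    HasTreewidthLE G (q + k) ∨
    ∃ C : (G.induce (Xᶜ : Set V)).ConnectedComponent,
      q + 1 ≤ (Subtype.val '' C.supp).ncard ∧
      (∀ C' : (G.induce (Xᶜ : Set V)).ConnectedComponent,
        q + 1 ≤ (Subtype.val '' C'.supp).ncard → C' = C) ∧
      (Set.univ \ ((Subtype.val '' C.supp) ∪
        {v : V | v ∉ Subtype.val '' C.supp ∧ ∃ u ∈ C.supp, G.Adj v (u : V)})).ncard ≤ q := by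
  classical
  by_cases hbig : ∃ C : (G.induce (Xᶜ : Set V)).ConnectedComponent,
      q + 1 ≤ (Subtype.val '' C.supp).ncard
  swap
  · left
    push_neg at hbig
    exact small_components_tw G q k X htw (fun C => by have := hbig C; omega)
  right
  obtain ⟨C, hC⟩ := hbig
  set A : Set V := Subtype.val '' C.supp with hA
  set S : Set V := {v : V | v ∉ A ∧ ∃ u ∈ C.supp, G.Adj v (u : V)} with hS
  set B2 : Set V := Set.univ \ (A ∪ S) with hB2
  have hAX : A ⊆ (Xᶜ : Set V) := by
    rintro _ ⟨u, -, rfl⟩; exact u.2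
  have hSX : S ⊆ X := by
    rintro v ⟨hvA, u, hu, hadj⟩
    by_contra hvX
    have hv' : v ∈ (Xᶜ : Set V) := hvX
    have hadj' : (G.induce (Xᶜ : Set V)).Adj ⟨v, hv'⟩ u := hadj
    have : (⟨v, hv'⟩ : (Xᶜ : Set V)) ∈ C.supp := by
      have hu' : (G.induce (Xᶜ : Set V)).connectedComponentMk u = C := hu
      have : (G.induce (Xᶜ : Set V)).connectedComponentMk ⟨v, hv'⟩ =
          (G.induce (Xᶜ : Set V)).connectedComponentMk u :=
        ConnectedComponent.sound hadj'.reachable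
      exact this.trans hu'
    exact hvA ⟨_, this, rfl⟩
  -- |S| ≤ k + 1
  have hScard : S.ncard ≤ k + 1 := by
    obtain ⟨t, T, B, hdec, hbags⟩ := htw
    set W : Set X := {x : X | ∃ u ∈ C.supp, G.Adj (x : V) (u : V)} with hW
    obtain ⟨i, hWB⟩ := clique_in_bag hdec W (Set.toFinite _) (nbr_clique G X C)
    have hSW : S = Subtype.val '' W := by
      ext v
      constructor
      · intro hv
        exact ⟨⟨v, hSX hv⟩, hv.2, rfl⟩
      · rintro ⟨x, hx, rfl⟩
        refine ⟨fun hmem => ?_, hx⟩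
        exact (hAX hmem) x.2
    rw [hSW, Set.ncard_image_of_injective _ Subtype.val_injective]
    exact le_trans (Set.ncard_le_ncard hWB (hbags i).1) (hbags i).2
  -- |B2| ≤ q
  have hB2card : B2.ncard ≤ q := by
    by_contra hgt
    push_neg at hgt
    refine hsep ⟨A, S, B2, ?_, ?_, ?_, ?_, ?_, hScard, le_trans (by omega) hC, hgt.le⟩
    · rw [hB2, Set.union_diff_cancel (Set.subset_univ _)]
    · rw [Set.disjoint_left]
      rintro v hvA ⟨hvA', -⟩; exact hvA' hvA
    · rw [Set.disjoint_left]
      intro v hvA hvB; exact hvB.2 (Or.inl hvA)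
    · rw [Set.disjoint_left]
      intro v hvS hvB; exact hvB.2 (Or.inr hvS)
    · rintro a ⟨u, hu, rfl⟩ b hb hadj
      refine hb.2 ?_
      by_cases hbA : b ∈ A
      · exact Or.inl hbA
      · exact Or.inr ⟨hbA, u, hu, hadj.symm⟩
  refine ⟨C, hC, ?_, hB2card⟩
  intro C' hC'
  by_contra hne
  have hsub : Subtype.val '' C'.supp ⊆ B2 := by
    rintro _ ⟨u', hu', rfl⟩
    refine ⟨trivial, ?_⟩
    rintro (h | h)
    · obtain ⟨u, hu, huv⟩ := h
      have : u = u' := Subtype.val_injective huv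
      subst this
      have h1 : (G.induce (Xᶜ : Set V)).connectedComponentMk u = C := hu
      have h2 : (G.induce (Xᶜ : Set V)).connectedComponentMk u = C' := hu'
      exact hne (h2.symm.trans h1)
    · exact u'.2 (hSX h)
  have := Set.ncard_le_ncard hsub (Set.toFinite _)
  omega
end
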